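/- Let μ ∈ ℂ with Re(μ) > 0. Then for every x ∈ ℂ, F(μ;q,x) = (q^μ;q)_∞ · Σ_{n=0}^∞ q^{nμ}·e^{−q^n x}/(q;q)_n, the series on the right converging absolutely. -/

import Mathlib

set_option maxHeartbeats 1000000


/-- `(a;c)_n = ∏_{j=0}^{n-1} (1 - a c^j)`. -/
noncomputable def qPoch (a c : ℂ) (n : ℕ) : ℂ := ∏ j ∈ Finset.range n, (1 - a * c ^ j)

/-- `(a;c)_∞ = ∏_{j=0}^{∞} (1 - a c^j)`. -/
noncomputable def qPochInf (a c : ℂ) : ℂ := ∏' j : ℕ, (1 - a * c ^ j)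

/-- `q^μ := exp (μ log q)` for real `q > 0` and complex `μ`. -/
noncomputable def qpow (q : ℝ) (μ : ℂ) : ℂ := Complex.exp (μ * Real.log q)

/-- `F(μ;q,x) = Σ_{n≥0} ((q^μ;q)_n / n!) (-x)^n`. -/
noncomputable def F (μ : ℂ) (q : ℝ) (x : ℂ) : ℂ :=
  ∑' n : ℕ, qPoch (qpow q μ) (q : ℂ) n / (Nat.factorial n : ℂ) * (-x) ^ n

/-- `(a)_n = a (a+1) ⋯ (a+n-1)`. -/
noncomputable def poch (a : ℂ) (n : ℕ) : ℂ := ∏ j ∈ Finset.range n, (a + (j : ℂ))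

/-- `G(a;q,x) = Σ_{n≥0} ((a)_n q^{n(n+1)/2} / (q;q)_n) (-x)^n`. -/
noncomputable def G (a : ℂ) (q : ℝ) (x : ℂ) : ℂ :=
  ∑' n : ℕ, poch a n * (q : ℂ) ^ (n * (n + 1) / 2) / qPoch (q : ℂ) (q : ℂ) n * (-x) ^ n


open Finset Filter Complex

section aux
variable {q : ℝ}

lemma aux_norm_le (hq0 : 0 < q) (hq1 : q < 1) {w : ℂ} (hw : ‖w‖ < 1) (j : ℕ) : ‖w * (q:ℂ) ^ j‖ ≤ ‖w‖ := by
  rw [norm_mul, norm_pow, Complex.norm_real, Real.norm_eq_abs, abs_of_pos hq0]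
  calc ‖w‖ * q ^ j ≤ ‖w‖ * 1 := by
        have := pow_le_one₀ hq0.le hq1.le (n := j)
        nlinarith [norm_nonneg w]
    _ = ‖w‖ := mul_one _

lemma aux_ne_zero (hq0 : 0 < q) (hq1 : q < 1) {w : ℂ} (hw : ‖w‖ < 1) (j : ℕ) : 1 - w * (q:ℂ) ^ j ≠ 0 := by
  intro h
  have h2 : w * (q:ℂ) ^ j = 1 := by linear_combination -h
  have := aux_norm_le hq0 hq1 hw j
  rw [h2, norm_one] at this
  linarith

lemma aux_sum_log (hq0 : 0 < q) (hq1 : q < 1) {w : ℂ} (hw : ‖w‖ < 1) :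
    Summable (fun j : ℕ => Complex.log (1 - w * (q:ℂ) ^ j)) := by
  apply Summable.of_norm_bounded_eventually_nat (g := fun j => (3/2) * (‖w‖ * q ^ j))
  · exact ((summable_geometric_of_lt_one hq0.le hq1).mul_left _).mul_left _
  · have h0 : Tendsto (fun j : ℕ => ‖w‖ * q ^ j) atTop (nhds 0) := by
      simpa using (tendsto_pow_atTop_nhds_zero_of_lt_one hq0.le hq1).const_mul ‖w‖
    filter_upwards [h0.eventually_le_const (by norm_num : (0:ℝ) < 1/2)] with j hj
    have hnorm : ‖-(w * (q:ℂ) ^ j)‖ ≤ 1/2 := by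
      rw [norm_neg, norm_mul, norm_pow, Complex.norm_real, Real.norm_eq_abs, abs_of_pos hq0]
      exact hj
    have := Complex.norm_log_one_add_half_le_self hnorm
    rw [show (1:ℂ) + -(w * (q:ℂ)^j) = 1 - w * (q:ℂ)^j by ring] at this
    rw [norm_neg, norm_mul, norm_pow, Complex.norm_real, Real.norm_eq_abs, abs_of_pos hq0] at this
    exact this

lemma aux_mult (hq0 : 0 < q) (hq1 : q < 1) {w : ℂ} (hw : ‖w‖ < 1) : Multipliable (fun j : ℕ => 1 - w * (q:ℂ) ^ j) :=
  Complex.multipliable_of_summable_log (aux_sum_log hq0 hq1 hw)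

lemma aux_tendsto_prod (hq0 : 0 < q) (hq1 : q < 1) {w : ℂ} (hw : ‖w‖ < 1) :
    Tendsto (fun N => ∏ j ∈ range N, (1 - w * (q:ℂ) ^ j)) atTop (nhds (qPochInf w (q:ℂ))) :=
  (aux_mult hq0 hq1 hw).hasProd.tendsto_prod_nat


lemma aux_factor_pos (hq0 : 0 < q) (hq1 : q < 1) (j : ℕ) : 0 < 1 - q * q ^ j := by
  have h1 : q * q ^ j < 1 := by
    calc q * q ^ j ≤ q * 1 := by nlinarith [pow_le_one₀ hq0.le hq1.le (n := j), pow_nonneg hq0.le j]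
      _ < 1 := by linarith
  linarith

lemma aux_qPoch_eq (hq0 : 0 < q) (hq1 : q < 1) (n : ℕ) :
    qPoch (q:ℂ) (q:ℂ) n = ((∏ j ∈ range n, (1 - q * q ^ j) : ℝ) : ℂ) := by
  rw [qPoch]; push_cast; rfl

lemma aux_exists_c (hq0 : 0 < q) (hq1 : q < 1) :
    ∃ c : ℝ, 0 < c ∧ ∀ n, c ≤ ∏ j ∈ range n, (1 - q * q ^ j) := by
  set g : ℕ → ℝ := fun j => 1 - q * q ^ j with hg
  have hgpos : ∀ j, 0 < g j := aux_factor_pos hq0 hq1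
  have hqc : ‖(q:ℂ)‖ < 1 := by
    rw [Complex.norm_real, Real.norm_eq_abs, abs_of_pos hq0]; exact hq1
  have hlogC : Summable (fun j : ℕ => Complex.log (1 - (q:ℂ) * (q:ℂ) ^ j)) :=
    aux_sum_log hq0 hq1 hqc
  have hcast : ∀ j : ℕ, ((g j : ℝ) : ℂ) = 1 - (q:ℂ) * (q:ℂ) ^ j := by
    intro j; rw [hg]; push_cast; ring
  have hlog : Summable (fun j : ℕ => Real.log (g j)) := by
    rw [← Complex.summable_ofReal]
    apply hlogC.congr
    intro j
    rw [← hcast j, Complex.ofReal_log (hgpos j).le]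
  refine ⟨Real.exp (∑' j, Real.log (g j)), Real.exp_pos _, fun n => ?_⟩
  have hsplit := (Summable.sum_add_tsum_nat_add (f := fun j => Real.log (g j)) n hlog).symm
  have htail : (∑' j : ℕ, Real.log (g (j + n))) ≤ 0 := by
    apply tsum_nonpos
    intro j
    apply Real.log_nonpos (hgpos _).le
    simp only [hg]
    nlinarith [mul_nonneg hq0.le (pow_nonneg hq0.le (j + n))]
  calc Real.exp (∑' j, Real.log (g j))
      = Real.exp (∑ j ∈ range n, Real.log (g j) + ∑' j : ℕ, Real.log (g (j + n))) := by
        rw [hsplit]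
    _ ≤ Real.exp (∑ j ∈ range n, Real.log (g j)) := by
        apply Real.exp_le_exp.2; linarith
    _ = ∏ j ∈ range n, g j := by
        rw [Real.exp_sum]
        exact Finset.prod_congr rfl (fun j _ => Real.exp_log (hgpos j))

noncomputable def eulerF (q : ℝ) (w : ℂ) : ℂ := ∑' n : ℕ, w ^ n / qPoch (q:ℂ) (q:ℂ) n

variable {q : ℝ}

lemma aux_qPoch_pos (hq0 : 0 < q) (hq1 : q < 1) (n : ℕ) :
    0 < ∏ j ∈ range n, (1 - q * q ^ j) :=
  prod_pos (fun j _ => aux_factor_pos hq0 hq1 j)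

lemma aux_qPoch_norm (hq0 : 0 < q) (hq1 : q < 1) (n : ℕ) :
    ‖qPoch (q:ℂ) (q:ℂ) n‖ = ∏ j ∈ range n, (1 - q * q ^ j) := by
  rw [aux_qPoch_eq hq0 hq1, Complex.norm_real, Real.norm_eq_abs,
    abs_of_pos (aux_qPoch_pos hq0 hq1 n)]

lemma aux_qPoch_ne (hq0 : 0 < q) (hq1 : q < 1) (n : ℕ) : qPoch (q:ℂ) (q:ℂ) n ≠ 0 := by
  intro h
  have := aux_qPoch_norm hq0 hq1 n
  rw [h, norm_zero] at this
  exact absurd this.symm (ne_of_gt (aux_qPoch_pos hq0 hq1 n))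

lemma aux_summable_eulerF (hq0 : 0 < q) (hq1 : q < 1) {w : ℂ} (hw : ‖w‖ < 1) :
    Summable (fun n : ℕ => w ^ n / qPoch (q:ℂ) (q:ℂ) n) := by
  obtain ⟨c, hc, hcle⟩ := aux_exists_c hq0 hq1
  apply Summable.of_norm_bounded (g := fun n => ‖w‖ ^ n * c⁻¹)
  · exact (summable_geometric_of_lt_one (norm_nonneg w) hw).mul_right _
  · intro n
    rw [norm_div, norm_pow, aux_qPoch_norm hq0 hq1, div_eq_mul_inv]
    apply mul_le_mul_of_nonneg_left _ (pow_nonneg (norm_nonneg w) n)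
    exact inv_anti₀ hc (hcle n)

lemma aux_funcEq (hq0 : 0 < q) (hq1 : q < 1) {w : ℂ} (hw : ‖w‖ < 1) :
    (1 - w) * eulerF q w = eulerF q ((q:ℂ) * w) := by
  have hqw : ‖(q:ℂ) * w‖ < 1 := by
    rw [mul_comm]
    have h1 := aux_norm_le hq0 hq1 hw 1
    rw [pow_one] at h1
    exact lt_of_le_of_lt h1 hw
  have hs1 := aux_summable_eulerF hq0 hq1 hw
  have hs2 := aux_summable_eulerF hq0 hq1 hqw
  have hsub : eulerF q w - eulerF q ((q:ℂ) * w)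
      = ∑' n : ℕ, (w ^ n / qPoch (q:ℂ) (q:ℂ) n - ((q:ℂ) * w) ^ n / qPoch (q:ℂ) (q:ℂ) n) :=
    (Summable.tsum_sub hs1 hs2).symm
  have hterm : ∀ n : ℕ,
      w ^ (n+1) / qPoch (q:ℂ) (q:ℂ) (n+1) - ((q:ℂ) * w) ^ (n+1) / qPoch (q:ℂ) (q:ℂ) (n+1)
        = w * (w ^ n / qPoch (q:ℂ) (q:ℂ) n) := by
    intro n
    have hrec : qPoch (q:ℂ) (q:ℂ) (n+1) = qPoch (q:ℂ) (q:ℂ) n * (1 - (q:ℂ) * (q:ℂ) ^ n) := by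
      rw [qPoch, qPoch, prod_range_succ]
    have hq1c : ‖(q:ℂ)‖ < 1 := by
      rw [Complex.norm_real, Real.norm_eq_abs, abs_of_pos hq0]; exact hq1
    have hne : (1 - (q:ℂ) * (q:ℂ) ^ n) ≠ 0 := aux_ne_zero hq0 hq1 hq1c n
    have hne2 : qPoch (q:ℂ) (q:ℂ) n ≠ 0 := aux_qPoch_ne hq0 hq1 n
    rw [hrec]
    field_simp
    ring
  have hzero : eulerF q w - eulerF q ((q:ℂ) * w) = w * eulerF q w := by
    rw [hsub, Summable.tsum_eq_zero_add (hs1.sub hs2)]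
    simp only [pow_zero]
    rw [sub_self, zero_add]
    calc (∑' n : ℕ, (w ^ (n+1) / qPoch (q:ℂ) (q:ℂ) (n+1)
            - ((q:ℂ) * w) ^ (n+1) / qPoch (q:ℂ) (q:ℂ) (n+1)))
        = ∑' n : ℕ, w * (w ^ n / qPoch (q:ℂ) (q:ℂ) n) := tsum_congr hterm
      _ = w * eulerF q w := tsum_mul_left
  rw [eulerF] at hzero ⊢
  linear_combination hzero

lemma aux_pow_norm (hq0 : 0 < q) (hq1 : q < 1) {w : ℂ} (N : ℕ) :
    ‖(q:ℂ) ^ N * w‖ = q ^ N * ‖w‖ := by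
  rw [norm_mul, norm_pow, Complex.norm_real, Real.norm_eq_abs, abs_of_pos hq0]

lemma aux_pow_norm_lt (hq0 : 0 < q) (hq1 : q < 1) {w : ℂ} (hw : ‖w‖ < 1) (N : ℕ) :
    ‖(q:ℂ) ^ N * w‖ < 1 := by
  rw [aux_pow_norm hq0 hq1]
  calc q ^ N * ‖w‖ ≤ 1 * ‖w‖ := by
        have := pow_le_one₀ hq0.le hq1.le (n := N)
        nlinarith [norm_nonneg w]
    _ < 1 := by rw [one_mul]; exact hw

lemma aux_iter (hq0 : 0 < q) (hq1 : q < 1) {w : ℂ} (hw : ‖w‖ < 1) (N : ℕ) :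
    (∏ j ∈ range N, (1 - w * (q:ℂ) ^ j)) * eulerF q w = eulerF q ((q:ℂ) ^ N * w) := by
  induction N with
  | zero => simp
  | succ N ih =>
    rw [prod_range_succ, mul_comm (∏ j ∈ range N, (1 - w * (q:ℂ) ^ j)) (1 - w * (q:ℂ) ^ N),
      mul_assoc, ih]
    have hfe := aux_funcEq hq0 hq1 (aux_pow_norm_lt hq0 hq1 hw N)
    rw [show (1 : ℂ) - w * (q:ℂ) ^ N = 1 - (q:ℂ) ^ N * w by ring, hfe]
    congr 1
    ring

lemma aux_eulerF_near_one (hq0 : 0 < q) (hq1 : q < 1) :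
    ∃ C : ℝ, ∀ z : ℂ, ‖z‖ ≤ 1/2 → ‖eulerF q z - 1‖ ≤ C * ‖z‖ := by
  obtain ⟨c, hc, hcle⟩ := aux_exists_c hq0 hq1
  refine ⟨2 * c⁻¹, fun z hz => ?_⟩
  have hz1 : ‖z‖ < 1 := lt_of_le_of_lt hz (by norm_num)
  have hs := aux_summable_eulerF hq0 hq1 hz1
  have h1 : eulerF q z - 1 = ∑' n : ℕ, z ^ (n+1) / qPoch (q:ℂ) (q:ℂ) (n+1) := by
    rw [eulerF, Summable.tsum_eq_zero_add hs]
    simp [qPoch]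
  have hb : ∀ n : ℕ, ‖z ^ (n+1) / qPoch (q:ℂ) (q:ℂ) (n+1)‖ ≤ (c⁻¹ * ‖z‖) * ‖z‖ ^ n := by
    intro n
    rw [norm_div, norm_pow, aux_qPoch_norm hq0 hq1]
    have h2 : ‖z‖ ^ (n+1) / (∏ j ∈ range (n+1), (1 - q * q ^ j)) ≤ ‖z‖ ^ (n+1) / c := by
      apply div_le_div_of_nonneg_left (pow_nonneg (norm_nonneg z) _) hc (hcle (n+1))
    calc ‖z‖ ^ (n+1) / (∏ j ∈ range (n+1), (1 - q * q ^ j)) ≤ ‖z‖ ^ (n+1) / c := h2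
      _ = (c⁻¹ * ‖z‖) * ‖z‖ ^ n := by rw [pow_succ]; field_simp
  have hsnorm : Summable (fun n : ℕ => (c⁻¹ * ‖z‖) * ‖z‖ ^ n) :=
    (summable_geometric_of_lt_one (norm_nonneg z) hz1).mul_left _
  have hsum2 : Summable (fun n : ℕ => ‖z ^ (n+1) / qPoch (q:ℂ) (q:ℂ) (n+1)‖) :=
    Summable.of_nonneg_of_le (fun n => norm_nonneg _) hb hsnorm
  calc ‖eulerF q z - 1‖ = ‖∑' n : ℕ, z ^ (n+1) / qPoch (q:ℂ) (q:ℂ) (n+1)‖ := by rw [h1]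
    _ ≤ ∑' n : ℕ, ‖z ^ (n+1) / qPoch (q:ℂ) (q:ℂ) (n+1)‖ := norm_tsum_le_tsum_norm hsum2
    _ ≤ ∑' n : ℕ, (c⁻¹ * ‖z‖) * ‖z‖ ^ n := Summable.tsum_le_tsum hb hsum2 hsnorm
    _ = (c⁻¹ * ‖z‖) * (1 - ‖z‖)⁻¹ := by
        rw [tsum_mul_left, tsum_geometric_of_lt_one (norm_nonneg z) hz1]
    _ ≤ (2 * c⁻¹) * ‖z‖ := by
        have h3 : (1 - ‖z‖)⁻¹ ≤ 2 := by
          rw [show (2:ℝ) = (1/2:ℝ)⁻¹ by norm_num]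
          apply inv_anti₀ (by norm_num)
          linarith
        have h4 : 0 ≤ c⁻¹ * ‖z‖ := mul_nonneg (inv_nonneg.2 hc.le) (norm_nonneg z)
        nlinarith [norm_nonneg z, inv_nonneg.2 hc.le]

lemma aux_euler_id (hq0 : 0 < q) (hq1 : q < 1) {w : ℂ} (hw : ‖w‖ < 1) :
    qPochInf w (q:ℂ) * eulerF q w = 1 := by
  obtain ⟨C, hC⟩ := aux_eulerF_near_one hq0 hq1
  have t1 : Tendsto (fun N => (∏ j ∈ range N, (1 - w * (q:ℂ) ^ j)) * eulerF q w) atTop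
      (nhds (qPochInf w (q:ℂ) * eulerF q w)) :=
    (aux_tendsto_prod hq0 hq1 hw).mul_const _
  have t2 : Tendsto (fun N => eulerF q ((q:ℂ) ^ N * w)) atTop (nhds 1) := by
    have key : Tendsto (fun N => eulerF q ((q:ℂ) ^ N * w) - 1) atTop (nhds 0) := by
      apply squeeze_zero_norm' (a := fun N => (C * ‖w‖) * q ^ N)
      · have h0 : Tendsto (fun N : ℕ => q ^ N * ‖w‖) atTop (nhds 0) := by
          simpa using ((tendsto_pow_atTop_nhds_zero_of_lt_one hq0.le hq1).mul_const ‖w‖)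
        filter_upwards [h0.eventually_le_const (by norm_num : (0:ℝ) < 1/2)] with N hN
        have := hC ((q:ℂ) ^ N * w) (by rw [aux_pow_norm hq0 hq1]; exact hN)
        rw [aux_pow_norm hq0 hq1] at this
        calc ‖eulerF q ((q:ℂ) ^ N * w) - 1‖ ≤ C * (q ^ N * ‖w‖) := this
          _ = (C * ‖w‖) * q ^ N := by ring
      · simpa using ((tendsto_pow_atTop_nhds_zero_of_lt_one hq0.le hq1).const_mul (C * ‖w‖))
    have := key.add_const 1
    simpa using this
  have t2' : Tendsto (fun N => (∏ j ∈ range N, (1 - w * (q:ℂ) ^ j)) * eulerF q w) atTop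
      (nhds 1) := by
    apply t2.congr
    intro N
    exact (aux_iter hq0 hq1 hw N).symm
  exact tendsto_nhds_unique t1 t2'

lemma aux_qPochInf_ne (hq0 : 0 < q) (hq1 : q < 1) {w : ℂ} (hw : ‖w‖ < 1) :
    qPochInf w (q:ℂ) ≠ 0 :=
  left_ne_zero_of_mul (by rw [aux_euler_id hq0 hq1 hw]; exact one_ne_zero)

lemma aux_split (hq0 : 0 < q) (hq1 : q < 1) {w : ℂ} (hw : ‖w‖ < 1) (m : ℕ) :
    qPochInf w (q:ℂ) = qPoch w (q:ℂ) m * qPochInf (w * (q:ℂ) ^ m) (q:ℂ) := by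
  have hwm : ‖w * (q:ℂ) ^ m‖ < 1 := lt_of_le_of_lt (aux_norm_le hq0 hq1 hw m) hw
  have t1 : Tendsto (fun N => ∏ j ∈ range (m + N), (1 - w * (q:ℂ) ^ j)) atTop
      (nhds (qPochInf w (q:ℂ))) := by
    have := (aux_tendsto_prod hq0 hq1 hw).comp (tendsto_add_atTop_nat m)
    apply this.congr
    intro N
    simp [Nat.add_comm]
  have t2 : Tendsto (fun N => ∏ j ∈ range (m + N), (1 - w * (q:ℂ) ^ j)) atTop
      (nhds (qPoch w (q:ℂ) m * qPochInf (w * (q:ℂ) ^ m) (q:ℂ))) := by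
    have h2 := (aux_tendsto_prod hq0 hq1 hwm).const_mul (qPoch w (q:ℂ) m)
    apply h2.congr
    intro N
    rw [Finset.prod_range_add, qPoch]
    congr 1
    apply Finset.prod_congr rfl
    intro j _
    rw [pow_add]
    ring
  exact tendsto_nhds_unique t1 t2

lemma aux_pochInf_eulerF (hq0 : 0 < q) (hq1 : q < 1) {w : ℂ} (hw : ‖w‖ < 1) (m : ℕ) :
    qPochInf w (q:ℂ) * eulerF q (w * (q:ℂ) ^ m) = qPoch w (q:ℂ) m := by
  have hwm : ‖w * (q:ℂ) ^ m‖ < 1 := lt_of_le_of_lt (aux_norm_le hq0 hq1 hw m) hw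
  rw [aux_split hq0 hq1 hw m, mul_assoc, aux_euler_id hq0 hq1 hwm, mul_one]

lemma aux_qpow_norm_lt (hq0 : 0 < q) (hq1 : q < 1) {μ : ℂ} (hμ : 0 < μ.re) :
    ‖qpow q μ‖ < 1 := by
  rw [qpow, Complex.norm_exp]
  have hre : (μ * (Real.log q : ℂ)).re = μ.re * Real.log q := by
    simp [Complex.mul_re]
  rw [hre]
  have hlog : Real.log q < 0 := Real.log_neg hq0 hq1
  calc Real.exp (μ.re * Real.log q) < Real.exp 0 := by
        apply Real.exp_lt_exp.2
        exact mul_neg_of_pos_of_neg hμ hlog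
    _ = 1 := Real.exp_zero


/-- Dirichlet series representation
`F(μ;q,x) = (q^μ;q)_∞ Σ_{n≥0} q^{nμ} e^{-q^n x} / (q;q)_n` for `Re μ > 0`. -/
theorem stmt6 (q : ℝ) (hq0 : 0 < q) (hq1 : q < 1)
    (μ : ℂ) (hμ : 0 < μ.re) (x : ℂ) :
    Summable (fun n : ℕ =>
      ‖qpow q μ ^ n * Complex.exp (-((q : ℂ) ^ n * x)) /
        qPoch (q : ℂ) (q : ℂ) n‖) ∧
    F μ q x =
      qPochInf (qpow q μ) (q : ℂ) *
        ∑' n : ℕ, qpow q μ ^ n * Complex.exp (-((q : ℂ) ^ n * x)) /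
          qPoch (q : ℂ) (q : ℂ) n := by
  set a : ℂ := qpow q μ with ha_def
  have ha : ‖a‖ < 1 := aux_qpow_norm_lt hq0 hq1 hμ
  obtain ⟨c, hc, hcle⟩ := aux_exists_c hq0 hq1
  -- pointwise norm computation
  have hexp_norm : ∀ n : ℕ, ‖Complex.exp (-((q:ℂ) ^ n * x))‖ ≤ Real.exp ‖x‖ := by
    intro n
    rw [Complex.norm_exp]
    apply Real.exp_le_exp.2
    have hre : (-((q:ℂ) ^ n * x)).re = -(q ^ n * x.re) := by
      rw [Complex.neg_re, ← Complex.ofReal_pow, Complex.re_ofReal_mul]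
    rw [hre]
    have h1 : |x.re| ≤ ‖x‖ := Complex.abs_re_le_norm x
    have h2 : q ^ n ≤ 1 := pow_le_one₀ hq0.le hq1.le
    have h3 : 0 ≤ q ^ n := pow_nonneg hq0.le n
    calc -(q ^ n * x.re) ≤ q ^ n * |x.re| := by nlinarith [neg_abs_le x.re, abs_nonneg x.re]
      _ ≤ ‖x‖ := by nlinarith [abs_nonneg x.re]
  have hbound : ∀ n : ℕ, ‖a ^ n * Complex.exp (-((q:ℂ) ^ n * x)) / qPoch (q:ℂ) (q:ℂ) n‖
      ≤ (Real.exp ‖x‖ * c⁻¹) * ‖a‖ ^ n := by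
    intro n
    rw [norm_div, norm_mul, norm_pow, aux_qPoch_norm hq0 hq1]
    have h1 : ‖a‖ ^ n * ‖Complex.exp (-((q:ℂ) ^ n * x))‖ ≤ ‖a‖ ^ n * Real.exp ‖x‖ :=
      mul_le_mul_of_nonneg_left (hexp_norm n) (pow_nonneg (norm_nonneg a) n)
    calc ‖a‖ ^ n * ‖Complex.exp (-((q:ℂ) ^ n * x))‖ / (∏ j ∈ range n, (1 - q * q ^ j))
        ≤ (‖a‖ ^ n * Real.exp ‖x‖) / c := by
          apply div_le_div₀ (by positivity) h1 hc (hcle n)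
      _ = (Real.exp ‖x‖ * c⁻¹) * ‖a‖ ^ n := by field_simp
  have hsum_norm : Summable (fun n : ℕ =>
      ‖a ^ n * Complex.exp (-((q:ℂ) ^ n * x)) / qPoch (q:ℂ) (q:ℂ) n‖) := by
    apply Summable.of_nonneg_of_le (fun n => norm_nonneg _) hbound
    exact (summable_geometric_of_lt_one (norm_nonneg a) ha).mul_left _
  constructor
  · apply hsum_norm.congr
    intro n
    rfl
  -- the identity
  set T : ℕ → ℕ → ℂ := fun n m =>
    (a ^ n / qPoch (q:ℂ) (q:ℂ) n) * ((-((q:ℂ) ^ n * x)) ^ m / (Nat.factorial m : ℂ)) with hT_def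
  have hT : Summable (Function.uncurry T) := by
    apply Summable.of_norm_bounded
      (g := fun p : ℕ × ℕ => (‖a‖ ^ p.1 * c⁻¹) * (‖x‖ ^ p.2 / (Nat.factorial p.2 : ℝ)))
    · exact Summable.mul_of_nonneg (f := fun n : ℕ => ‖a‖ ^ n * c⁻¹)
        (g := fun m : ℕ => ‖x‖ ^ m / (Nat.factorial m : ℝ))
        ((summable_geometric_of_lt_one (norm_nonneg a) ha).mul_right _)
        (Real.summable_pow_div_factorial ‖x‖)
        (fun n => by positivity) (fun m => by positivity)
    · rintro ⟨n, m⟩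
      simp only [Function.uncurry, hT_def]
      rw [norm_mul, norm_div, norm_div, norm_pow, norm_pow, aux_qPoch_norm hq0 hq1]
      have hxq : ‖-((q:ℂ) ^ n * x)‖ = q ^ n * ‖x‖ := by
        rw [norm_neg, norm_mul, norm_pow, Complex.norm_real, Real.norm_eq_abs, abs_of_pos hq0]
      have hfac : ‖(Nat.factorial m : ℂ)‖ = (Nat.factorial m : ℝ) := by
        simp
      rw [hxq, hfac]
      have h2 : (q ^ n * ‖x‖) ^ m ≤ ‖x‖ ^ m := by
        apply pow_le_pow_left₀ (by positivity)
        have := pow_le_one₀ hq0.le hq1.le (n := n)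
        nlinarith [norm_nonneg x, pow_nonneg hq0.le n]
      have h3 : ‖a‖ ^ n / (∏ j ∈ range n, (1 - q * q ^ j)) ≤ ‖a‖ ^ n * c⁻¹ := by
        rw [div_eq_mul_inv]
        apply mul_le_mul_of_nonneg_left _ (pow_nonneg (norm_nonneg a) n)
        exact inv_anti₀ hc (hcle n)
      have h4 : (q ^ n * ‖x‖) ^ m / (Nat.factorial m : ℝ) ≤ ‖x‖ ^ m / (Nat.factorial m : ℝ) :=
        div_le_div_of_nonneg_right h2 (by positivity) |>.trans_eq rfl
      apply mul_le_mul h3 h4 (by positivity) (by positivity)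
  have expser : ∀ z : ℂ, Complex.exp z = ∑' m : ℕ, z ^ m / (Nat.factorial m : ℂ) := by
    intro z
    rw [Complex.exp_eq_exp_ℂ, NormedSpace.exp_eq_tsum_div]
  have step1 : ∀ n : ℕ, a ^ n * Complex.exp (-((q:ℂ) ^ n * x)) / qPoch (q:ℂ) (q:ℂ) n
      = ∑' m : ℕ, T n m := by
    intro n
    simp only [hT_def]
    rw [expser, tsum_mul_left, mul_div_right_comm]
  have step3 : ∀ m : ℕ, (∑' n : ℕ, T n m)
      = ((-x) ^ m / (Nat.factorial m : ℂ)) * eulerF q (a * (q:ℂ) ^ m) := by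
    intro m
    have hTnm : ∀ n : ℕ, T n m = ((-x) ^ m / (Nat.factorial m : ℂ))
        * ((a * (q:ℂ) ^ m) ^ n / qPoch (q:ℂ) (q:ℂ) n) := by
      intro n
      simp only [hT_def]
      have hpow : (-((q:ℂ) ^ n * x)) ^ m = (-x) ^ m * ((q:ℂ) ^ m) ^ n := by
        rw [show -((q:ℂ) ^ n * x) = (-x) * (q:ℂ) ^ n by ring, mul_pow, ← pow_mul, ← pow_mul,
          Nat.mul_comm]
      rw [hpow, mul_pow]
      ring
    rw [tsum_congr hTnm, tsum_mul_left, eulerF]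
  have hswap : (∑' n : ℕ, ∑' m : ℕ, T n m) = ∑' m : ℕ, ∑' n : ℕ, T n m := (Summable.tsum_comm hT).symm
  have key : qPochInf a (q:ℂ) * (∑' n : ℕ, a ^ n * Complex.exp (-((q:ℂ) ^ n * x))
      / qPoch (q:ℂ) (q:ℂ) n) = F μ q x := by
    rw [tsum_congr step1, hswap, tsum_congr step3, ← tsum_mul_left]
    rw [F]
    apply tsum_congr
    intro m
    have hid := aux_pochInf_eulerF hq0 hq1 ha m
    calc qPochInf a (q:ℂ) * ((-x) ^ m / (Nat.factorial m : ℂ) * eulerF q (a * (q:ℂ) ^ m))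
        = (qPochInf a (q:ℂ) * eulerF q (a * (q:ℂ) ^ m)) * ((-x) ^ m / (Nat.factorial m : ℂ)) := by
          ring
      _ = qPoch a (q:ℂ) m * ((-x) ^ m / (Nat.factorial m : ℂ)) := by rw [hid]
      _ = qPoch a (q:ℂ) m / (Nat.factorial m : ℂ) * (-x) ^ m := by ring
  exact key.symm
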